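/- Let G be a directed graph. The object of IT_G given by H(0) = G(0), H(1) = (G(0) × {p₀,p₁} + G(1) × {q₀,q₁,q₂})/∼ (the node set of G ⊗ M₀), with structure maps induced by the standard representation M₀, together with the interface transformation φ^{M₀,G}, is an initial object of IT_G. In particular, for every object (H, ψ) of IT_G there is a unique map ι₁ : G⊗M₀(0) → H(1) satisfying ι₁([(x, p_{i+1})]) = H(mᵢ)(ψ₀(x)) for i = 0,1 and all x ∈ G(0), and ψ₁ = ι₁ ∘ φ₁^{M₀,G}. -/

import Mathlib

open CategoryTheory Limits Opposite

section IT

variable {C : Type} [SmallCategory C]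

/-- An object of the category `IT_G`. -/
structure ITObj (G : Cᵒᵖ ⥤ Type) where
  H : C ⥤ Type
  φ : ∀ c : C, G.obj (op c) → H.obj c
  nat : ∀ {c' c : C} (f : c' ⟶ c) (x : G.obj (op c)),
    H.map f (φ c' (G.map f.op x)) = φ c x

/-- A morphism of `IT_G`. -/
@[ext]
structure ITHom {G : Cᵒᵖ ⥤ Type} (X Y : ITObj G) where
  n : X.H ⟶ Y.H
  comm : ∀ (c : C) (x : G.obj (op c)), n.app c (X.φ c x) = Y.φ c x

instance (G : Cᵒᵖ ⥤ Type) : Category (ITObj G) where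
  Hom := ITHom
  id X := ⟨𝟙 X.H, fun c x => rfl⟩
  comp f g := ⟨f.n ≫ g.n, fun c x => by
    simp only [NatTrans.comp_app, types_comp_apply, f.comm, g.comm]⟩
  id_comp f := by apply ITHom.ext; simp
  comp_id f := by apply ITHom.ext; simp
  assoc f g h := by apply ITHom.ext; simp

end IT

section M0

variable (G : WalkingParallelPairᵒᵖ ⥤ Type)

/-- Arcs of the directed graph `G`. -/
abbrev arcs : Type := G.obj (op WalkingParallelPair.one)

/-- Nodes of the directed graph `G`. -/
abbrev nodes : Type := G.obj (op WalkingParallelPair.zero)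

/-- The source map of `G`. -/
abbrev srcMap : arcs G → nodes G := G.map (Quiver.Hom.op WalkingParallelPairHom.left)

/-- The target map of `G`. -/
abbrev tgtMap : arcs G → nodes G := G.map (Quiver.Hom.op WalkingParallelPairHom.right)

/-- The generating relation whose quotient is the node set `G ⊗ M₀(0)` of `L(G)`:
`(x,p₁) ∼ (y,p₀)` whenever there is an arc from `x` to `y` (`true` codes `p₁`). -/
def lrel : nodes G × Bool → nodes G × Bool → Prop :=
  fun p q => p.2 = true ∧ q.2 = false ∧ ∃ f : arcs G, srcMap G f = p.1 ∧ tgtMap G f = q.1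

/-- The node set of `G ⊗ M₀`, i.e. `(G(0) × {p₀,p₁} + G(1) × {q₀,q₁,q₂})/∼`. -/
def LN : Type := Quot (lrel G)

/-- The object of `IT_G` induced by the standard representation `M₀` and the interface
transformation `φ^{M₀,G}`: `H(0) = G(0)`, `H(1) = G ⊗ M₀(0)`, `H(m₀) : x ↦ [(x,p₁)]`,
`H(m₁) : x ↦ [(x,p₀)]`, `φ₀ = id`, `φ₁ : f ↦ [(∂₀ f, p₁)] = [(f, q₁)]`. -/
def M0Obj : ITObj G where
  H := parallelPair (TypeCat.ofHom (fun x : nodes G => (Quot.mk (lrel G) (x, true) : LN G)))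
    (TypeCat.ofHom (fun x : nodes G => Quot.mk (lrel G) (x, false)))
  φ := fun c => match c with
    | WalkingParallelPair.zero => fun x => x
    | WalkingParallelPair.one => fun f => Quot.mk (lrel G) (srcMap G f, true)
  nat := by
    intro c' c f x
    cases f using WalkingParallelPairHom.casesOn with
    | id =>
      rw [show WalkingParallelPairHom.id c' = 𝟙 c' from rfl,
        show Quiver.Hom.op (𝟙 c') = 𝟙 (op c') from rfl,
        CategoryTheory.Functor.map_id, CategoryTheory.Functor.map_id]
      rfl
    | left => exact rfl
    | right =>
      refine Eq.symm (Quot.sound ?_)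
      exact ⟨rfl, rfl, x, rfl, rfl⟩

end M0

/-- The canonical map `ι₁ : LN G → Y.H(1)`. -/
def iota1 (G : WalkingParallelPairᵒᵖ ⥤ Type) (Y : ITObj G) :
    LN G → Y.H.obj WalkingParallelPair.one :=
  Quot.lift
    (fun p => if p.2 then
        Y.H.map WalkingParallelPairHom.left (Y.φ WalkingParallelPair.zero p.1)
      else
        Y.H.map WalkingParallelPairHom.right (Y.φ WalkingParallelPair.zero p.1))
    (by
      rintro ⟨x, bx⟩ ⟨y, by'⟩ ⟨hx, hy, f, hsf, htf⟩
      simp only at hx hy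
      subst hx hy hsf htf
      simpa using (Y.nat WalkingParallelPairHom.left f).trans
        (Y.nat WalkingParallelPairHom.right f).symm)

theorem iota1_true (G : WalkingParallelPairᵒᵖ ⥤ Type) (Y : ITObj G) (x : nodes G) :
    iota1 G Y (Quot.mk (lrel G) (x, true)) =
      Y.H.map WalkingParallelPairHom.left (Y.φ WalkingParallelPair.zero x) := rfl

theorem iota1_false (G : WalkingParallelPairᵒᵖ ⥤ Type) (Y : ITObj G) (x : nodes G) :
    iota1 G Y (Quot.mk (lrel G) (x, false)) =
      Y.H.map WalkingParallelPairHom.right (Y.φ WalkingParallelPair.zero x) := rfl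

/-- The canonical morphism `M0Obj G ⟶ Y`. -/
def m0Hom (G : WalkingParallelPairᵒᵖ ⥤ Type) (Y : ITObj G) : M0Obj G ⟶ Y where
  n :=
    { app := fun c => match c with
        | WalkingParallelPair.zero => TypeCat.ofHom (Y.φ WalkingParallelPair.zero)
        | WalkingParallelPair.one => TypeCat.ofHom (iota1 G Y)
      naturality := by
        intro c c' f
        cases f using WalkingParallelPairHom.casesOn with
        | id => rw [show WalkingParallelPairHom.id c = 𝟙 c from rfl]; simp
        | left => rfl
        | right => rfl }
  comm := by
    rintro (_ | _) x
    · rfl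
    · exact Y.nat WalkingParallelPairHom.left x

/-- The object of `IT_G` built from the standard representation `M₀`
(with `H(1)` the node set of `G ⊗ M₀`) together with the interface transformation `φ^{M₀,G}`
is initial in `IT_G`.  In particular, for every object `(H, ψ)` of `IT_G` there is a unique map
`ι₁ : G ⊗ M₀(0) → H(1)` with `ι₁([(x,p₁)]) = H(m₀)(ψ₀(x))`, `ι₁([(x,p₀)]) = H(m₁)(ψ₀(x))`
for all nodes `x`, and `ψ₁ = ι₁ ∘ φ₁^{M₀,G}`. -/
theorem statement7 (G : WalkingParallelPairᵒᵖ ⥤ Type) :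
    Nonempty (IsInitial (M0Obj G)) ∧
    ∀ Y : ITObj G, ∃! ι₁ : LN G → Y.H.obj WalkingParallelPair.one,
      (∀ x : nodes G,
        ι₁ (Quot.mk (lrel G) (x, true)) =
          Y.H.map WalkingParallelPairHom.left (Y.φ WalkingParallelPair.zero x) ∧
        ι₁ (Quot.mk (lrel G) (x, false)) =
          Y.H.map WalkingParallelPairHom.right (Y.φ WalkingParallelPair.zero x)) ∧
      (∀ a : arcs G,
        Y.φ WalkingParallelPair.one a = ι₁ (Quot.mk (lrel G) (srcMap G a, true))) := by
  constructor
  · refine ⟨IsInitial.ofUniqueHom (fun Y => m0Hom G Y) ?_⟩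
    intro Y m
    apply ITHom.ext
    ext c x
    cases c with
    | zero => exact m.comm WalkingParallelPair.zero (x : nodes G)
    | one =>
      induction (x : LN G) using Quot.ind with
      | _ p =>
        obtain ⟨x, b⟩ := p
        cases b with
        | false =>
          have h := ConcreteCategory.congr_hom (m.n.naturality WalkingParallelPairHom.right) x
          calc m.n.app WalkingParallelPair.one (Quot.mk (lrel G) (x, false))
              = Y.H.map WalkingParallelPairHom.right
                  (m.n.app WalkingParallelPair.zero x) := h
            _ = _ := by
              rw [show m.n.app WalkingParallelPair.zero x = Y.φ WalkingParallelPair.zero x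
                from m.comm WalkingParallelPair.zero x]
              rfl
        | true =>
          have h := ConcreteCategory.congr_hom (m.n.naturality WalkingParallelPairHom.left) x
          calc m.n.app WalkingParallelPair.one (Quot.mk (lrel G) (x, true))
              = Y.H.map WalkingParallelPairHom.left
                  (m.n.app WalkingParallelPair.zero x) := h
            _ = _ := by
              rw [show m.n.app WalkingParallelPair.zero x = Y.φ WalkingParallelPair.zero x
                from m.comm WalkingParallelPair.zero x]
              rfl
  · intro Y
    refine ⟨iota1 G Y, ⟨fun x => ⟨rfl, rfl⟩, fun a =>
      (Y.nat WalkingParallelPairHom.left a).symm⟩, ?_⟩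
    intro ι' ⟨h1, _⟩
    funext z
    induction z using Quot.ind with
    | _ p =>
      obtain ⟨x, b⟩ := p
      cases b with
      | false => exact (h1 x).2
      | true => exact (h1 x).1
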